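/- Let ε > 0, L > 0, n₀ ≥ 1, and r > 0 be real numbers, and set η̃ = min(ε / (2 L n₀ r), 1 / (4 L n₀)). Then η̃ ≤ 1/(4 L n₀) and η̃ (1 − η̃ L) r² ≥ 3 ε (2 r − ε) / (16 L n₀). (The step-size inequality used in the proofs of Theorems 1 and 2, where r = ‖v_k‖ and η̃ is the normalized R-SPIDER learning rate.) -/

import Mathlib

/-- The step-size inequality used in the proofs of Theorems 1 and 2: with
`η̃ = min (ε / (2 L n₀ r)) (1 / (4 L n₀))` (here `ηt`), one has
`η̃ ≤ 1/(4 L n₀)` and `η̃ (1 − η̃ L) r² ≥ 3 ε (2 r − ε) / (16 L n₀)`. -/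
theorem stmt_7 (ε L n₀ r : ℝ) (hε : 0 < ε) (hL : 0 < L) (hn₀ : 1 ≤ n₀)
    (hr : 0 < r) (ηt : ℝ) (hηt : ηt = min (ε / (2 * L * n₀ * r)) (1 / (4 * L * n₀))) :
    ηt ≤ 1 / (4 * L * n₀) ∧
      3 * ε * (2 * r - ε) / (16 * L * n₀) ≤ ηt * (1 - ηt * L) * r ^ 2 := by
  have hn0 : (0:ℝ) < n₀ := lt_of_lt_of_le one_pos hn₀
  have hx : 1 / (4 * L * n₀) * L = 1 / (4 * n₀) := by field_simp
  have hq : 1 / (4 * n₀) ≤ (1:ℝ)/4 :=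
    one_div_le_one_div_of_le (by norm_num) (by linarith)
  constructor
  · rw [hηt]; exact min_le_right _ _
  rcases min_cases (ε / (2 * L * n₀ * r)) (1 / (4 * L * n₀)) with ⟨h1, h2⟩ | ⟨h1, h2⟩ <;>
    rw [hηt, h1] <;> rw [div_le_iff₀ (by positivity : (0:ℝ) < 16 * L * n₀)]
  · -- ηt = ε/(2Ln₀r)
    have haL : ε / (2 * L * n₀ * r) * L ≤ 1/4 := by
      have h := mul_le_mul_of_nonneg_right h2 hL.le
      rw [hx] at h
      linarith
    have hkey : ε / (2 * L * n₀ * r) * (1 - ε / (2 * L * n₀ * r) * L) * r ^ 2 *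
        (16 * L * n₀) = 8 * ε * r * (1 - ε / (2 * L * n₀ * r) * L) := by
      field_simp
      ring
    rw [hkey]
    nlinarith [mul_pos hε hr, sq_nonneg ε,
      mul_le_mul_of_nonneg_right haL (by positivity : (0:ℝ) ≤ 8 * ε * r)]
  · -- ηt = 1/(4Ln₀)
    have h34 : (3:ℝ)/4 ≤ 1 - 1 / (4 * L * n₀) * L := by rw [hx]; linarith
    have hkey : 1 / (4 * L * n₀) * (1 - 1 / (4 * L * n₀) * L) * r ^ 2 * (16 * L * n₀)
        = 4 * r ^ 2 * (1 - 1 / (4 * L * n₀) * L) := by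
      field_simp
      ring
    rw [hkey]
    nlinarith [sq_nonneg (r - ε), mul_le_mul_of_nonneg_right h34 (sq_nonneg r)]
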